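/- Let ω₁ > 0, H ∈ ℝ^{(n_X n_Y)×(n_X n_Y)}, Y ∈ ℝ^{n_Y×m_Y}, and V = {X ∈ ℝ^{n_X×m_X} : ‖X‖_F = ω₁}. Writing H = Σ_{i,j} h_{i,j} ⊗ e_i e_jᵀ with h_{i,j} ∈ ℝ^{n_X×n_X} (blocks indexed by the second Kronecker factor), define H* ∈ ℝ^{n_Y×n_Y} by (H*)_{i,j} = tr(h_{i,j}). Then ∫_V (X ⊗ Y)ᵀ H (X ⊗ Y) dX = (ω₁² |V| / (n_X m_X)) · I_{m_X} ⊗ (Yᵀ H* Y), where ⊗ denotes the Kronecker product. -/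

import Mathlib

set_option linter.unusedSectionVars false
open MeasureTheory Matrix Kronecker Finset
open scoped ENNReal NNReal

section aux

variable {ι : Type*} [Fintype ι] [DecidableEq ι]

/-- Signed coordinate permutation as a linear isometry equivalence of Euclidean space. -/
noncomputable def coordIso (σ : Equiv.Perm ι) (s : ι → ℝ) (hs : ∀ i, s i = 1 ∨ s i = -1) :
    EuclideanSpace ℝ ι ≃ₗᵢ[ℝ] EuclideanSpace ℝ ι where
  toFun x := WithLp.toLp 2 (fun i => s i * x (σ i))
  invFun y := WithLp.toLp 2 (fun j => s (σ.symm j) * y (σ.symm j))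
  map_add' x y := by ext i; simp [mul_add]
  map_smul' c x := by ext i; simp [smul_eq_mul]; ring
  left_inv x := by
    ext j
    have h2 : s (σ.symm j) * s (σ.symm j) = 1 := by rcases hs (σ.symm j) with h | h <;> rw [h] <;> norm_num
    show s (σ.symm j) * (s (σ.symm j) * x (σ (σ.symm j))) = x j
    rw [← mul_assoc, h2, one_mul, Equiv.apply_symm_apply]
  right_inv y := by
    ext j
    have h2 : s j * s j = 1 := by rcases hs j with h | h <;> rw [h] <;> norm_num
    show s j * (s (σ.symm (σ j)) * y (σ.symm (σ j))) = y j
    rw [Equiv.symm_apply_apply, ← mul_assoc, h2, one_mul]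
  norm_map' x := by
    simp only [LinearEquiv.coe_mk, EuclideanSpace.norm_eq]
    congr 1
    have : ∀ i, ‖s i * x (σ i)‖ ^ 2 = ‖x (σ i)‖ ^ 2 := by
      intro i
      rcases hs i with h | h <;> simp [h, norm_mul]
    show ∑ i, ‖s i * x (σ i)‖ ^ 2 = ∑ i, ‖x i‖ ^ 2
    rw [Finset.sum_congr rfl fun i _ => this i]
    exact Equiv.sum_comp σ fun j => ‖x j‖ ^ 2

@[simp] lemma coordIso_apply (σ : Equiv.Perm ι) (s : ι → ℝ) (hs : ∀ i, s i = 1 ∨ s i = -1)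
    (x : EuclideanSpace ℝ ι) (i : ι) : coordIso σ s hs x i = s i * x (σ i) := rfl

lemma coordIso_setIntegral (σ : Equiv.Perm ι) (s : ι → ℝ) (hs : ∀ i, s i = 1 ∨ s i = -1)
    (r d : ℝ) (g : EuclideanSpace ℝ ι → ℝ) :
    ∫ x in Metric.sphere (0 : EuclideanSpace ℝ ι) r, g (coordIso σ s hs x) ∂μH[d]
      = ∫ x in Metric.sphere (0 : EuclideanSpace ℝ ι) r, g x ∂μH[d] := by
  have h1 : MeasurePreserving (coordIso σ s hs) μH[d] μH[d] :=
    (coordIso σ s hs).toIsometryEquiv.measurePreserving_hausdorffMeasure d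
  have h2 : MeasurableEmbedding (coordIso σ s hs) :=
    (coordIso σ s hs).toHomeomorph.measurableEmbedding
  have h3 : (coordIso σ s hs) ⁻¹' (Metric.sphere (0 : EuclideanSpace ℝ ι) r)
      = Metric.sphere (0 : EuclideanSpace ℝ ι) r := by
    ext x
    simp [Set.mem_preimage, mem_sphere_iff_norm, (coordIso σ s hs).norm_map]
  have := h1.setIntegral_preimage_emb h2 g (Metric.sphere (0 : EuclideanSpace ℝ ι) r)
  rwa [h3] at this

end aux

section aux2

variable {ι : Type*} [Fintype ι] [DecidableEq ι]

lemma euclid_norm_sq (x : EuclideanSpace ℝ ι) : ‖x‖ ^ 2 = ∑ i, x i ^ 2 := by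
  rw [EuclideanSpace.norm_eq, Real.sq_sqrt (by positivity)]
  simp [Real.norm_eq_abs, sq_abs]

lemma euclid_abs_le (x : EuclideanSpace ℝ ι) (i : ι) : |x i| ≤ ‖x‖ := by
  have h1 : x i ^ 2 ≤ ‖x‖ ^ 2 := by
    rw [euclid_norm_sq]
    exact Finset.single_le_sum (f := fun j => x j ^ 2) (fun j _ => sq_nonneg _) (mem_univ i)
  calc |x i| = Real.sqrt (x i ^ 2) := (Real.sqrt_sq_eq_abs _).symm
    _ ≤ Real.sqrt (‖x‖ ^ 2) := Real.sqrt_le_sqrt h1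
    _ = ‖x‖ := Real.sqrt_sq (norm_nonneg x)

lemma integral_coord_mul_ne (r d : ℝ) {p q : ι} (hpq : p ≠ q) :
    ∫ x in Metric.sphere (0 : EuclideanSpace ℝ ι) r, x p * x q ∂μH[d] = 0 := by
  set s : ι → ℝ := fun i => if i = p then -1 else 1 with hsdef
  have hs : ∀ i, s i = 1 ∨ s i = -1 := by
    intro i; by_cases h : i = p <;> simp [hsdef, h]
  have key := coordIso_setIntegral (Equiv.refl ι) s hs r d (fun x => x p * x q)
  have : ∀ x : EuclideanSpace ℝ ι,
      (coordIso (Equiv.refl ι) s hs x) p * (coordIso (Equiv.refl ι) s hs x) q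
        = -(x p * x q) := by
    intro x
    have e1 : s p = -1 := by simp [hsdef]
    have e2 : s q = 1 := by simp [hsdef, Ne.symm hpq]
    simp only [coordIso_apply, Equiv.refl_apply, e1, e2]
    ring
  rw [show (fun x : EuclideanSpace ℝ ι =>
        (coordIso (Equiv.refl ι) s hs x) p * (coordIso (Equiv.refl ι) s hs x) q)
      = fun x => -(x p * x q) from funext this] at key
  rw [MeasureTheory.integral_neg] at key
  linarith [key]

lemma integral_sq_swap (r d : ℝ) (p q : ι) :
    ∫ x in Metric.sphere (0 : EuclideanSpace ℝ ι) r, x p ^ 2 ∂μH[d]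
      = ∫ x in Metric.sphere (0 : EuclideanSpace ℝ ι) r, x q ^ 2 ∂μH[d] := by
  have hs : ∀ i : ι, (1 : ℝ) = 1 ∨ (1 : ℝ) = -1 := fun _ => Or.inl rfl
  have key := coordIso_setIntegral (Equiv.swap p q) (fun _ => 1) (fun i => hs i) r d
    (fun x => x p ^ 2)
  have : ∀ x : EuclideanSpace ℝ ι,
      (coordIso (Equiv.swap p q) (fun _ => (1:ℝ)) (fun i => hs i) x) p ^ 2 = x q ^ 2 := by
    intro x; rw [coordIso_apply, Equiv.swap_apply_left]; ring
  rw [show (fun x : EuclideanSpace ℝ ι =>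
        (coordIso (Equiv.swap p q) (fun _ => (1:ℝ)) (fun i => hs i) x) p ^ 2)
      = fun x => x q ^ 2 from funext this] at key
  exact key.symm

end aux2

section finite

open Module

variable {ι : Type*} [Fintype ι] [DecidableEq ι] [Nonempty ι]

lemma face_finite (p : ι) (ε : ℝ) :
    μH[(Fintype.card ι : ℝ) - 1]
      ({x : EuclideanSpace ℝ ι | x p = ε ∧ ∀ i, |x i| ≤ 1}) < ⊤ := by
  set d : ℝ := (Fintype.card ι : ℝ) - 1 with hd
  have hd0 : 0 ≤ d := by
    have : 1 ≤ Fintype.card ι := Fintype.card_pos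
    have : (1 : ℝ) ≤ (Fintype.card ι : ℝ) := by exact_mod_cast this
    linarith
  set φ : EuclideanSpace ℝ {i : ι // i ≠ p} → EuclideanSpace ℝ ι :=
    fun y => (WithLp.toLp 2 (fun i => if h : i = p then ε else y ⟨i, h⟩) : EuclideanSpace ℝ ι) with hφ
  have hiso : Isometry φ := by
    apply Isometry.of_dist_eq
    intro y z
    rw [EuclideanSpace.dist_eq, EuclideanSpace.dist_eq]
    congr 1
    rw [Fintype.sum_eq_add_sum_compl p]
    have h1 : dist (φ y p) (φ z p) ^ 2 = 0 := by simp [hφ]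
    rw [h1, zero_add]
    rw [Finset.sum_subtype (p := fun i : ι => i ≠ p) ({p}ᶜ : Finset ι) (by intro x; simp)
      (fun i => dist (φ y i) (φ z i) ^ 2)]
    apply Finset.sum_congr rfl
    rintro ⟨i, hi⟩ _
    simp [hφ, dif_neg hi]
  have hcard : d = ((finrank ℝ (EuclideanSpace ℝ {i : ι // i ≠ p}) : ℕ) : ℝ) := by
    rw [finrank_euclideanSpace]
    have h1 : Fintype.card {i : ι // i ≠ p} = Fintype.card ι - 1 := by
      have h2 := Fintype.card_subtype_compl (α := ι) (· = p)
      simpa [Fintype.card_subtype_eq] using h2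
    rw [h1, Nat.cast_sub Fintype.card_pos, Nat.cast_one, hd]
  set K : Set (EuclideanSpace ℝ {i : ι // i ≠ p}) :=
    Metric.closedBall 0 (Fintype.card ι) with hK
  have hKfin : μH[d] K < ⊤ := by
    rw [hcard]
    exact (isCompact_closedBall _ _).measure_lt_top
  have hsub : {x : EuclideanSpace ℝ ι | x p = ε ∧ ∀ i, |x i| ≤ 1} ⊆ φ '' K := by
    rintro x ⟨hxp, hxb⟩
    refine ⟨(WithLp.toLp 2 (fun i : {i : ι // i ≠ p} => x i.1) : EuclideanSpace ℝ {i : ι // i ≠ p}), ?_, ?_⟩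
    · rw [hK, Metric.mem_closedBall, dist_zero_right]
      set y : EuclideanSpace ℝ {i : ι // i ≠ p} := WithLp.toLp 2 (fun i => x i.1) with hy
      have h2 : ‖y‖ ^ 2 ≤ (Fintype.card ι : ℝ) := by
        rw [euclid_norm_sq]
        calc ∑ i : {i : ι // i ≠ p}, y i ^ 2 ≤ ∑ _i : {i : ι // i ≠ p}, (1 : ℝ) := by
              apply Finset.sum_le_sum
              intro i _
              have := hxb i.1
              nlinarith [abs_nonneg (x i.1), sq_abs (x i.1)]
          _ = (Fintype.card {i : ι // i ≠ p} : ℝ) := by simp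
          _ ≤ (Fintype.card ι : ℝ) := by
              exact_mod_cast Fintype.card_subtype_le _
      have h3 : (1 : ℝ) ≤ (Fintype.card ι : ℝ) := by
        exact_mod_cast (Fintype.card_pos : 1 ≤ Fintype.card ι)
      nlinarith [norm_nonneg y]
    · ext i
      by_cases h : i = p
      · subst h; simp [hφ, hxp]
      · simp [hφ, dif_neg h, h]
  calc μH[d] {x : EuclideanSpace ℝ ι | x p = ε ∧ ∀ i, |x i| ≤ 1}
      ≤ μH[d] (φ '' K) := measure_mono hsub
    _ = μH[d] K := hiso.hausdorffMeasure_image (Or.inl hd0) K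
    _ < ⊤ := hKfin

end finite

section finite2

variable {ι : Type*} [Fintype ι] [DecidableEq ι] [Nonempty ι]

lemma sphere_hausdorff_lt_top (r : ℝ) (hr : 0 < r) :
    μH[(Fintype.card ι : ℝ) - 1] (Metric.sphere (0 : EuclideanSpace ℝ ι) r) < ⊤ := by
  set d : ℝ := (Fintype.card ι : ℝ) - 1 with hd
  have hd0 : 0 ≤ d := by
    have : (1 : ℝ) ≤ (Fintype.card ι : ℝ) := by
      exact_mod_cast (Fintype.card_pos : 1 ≤ Fintype.card ι)
    simp only [hd]; linarith
  set B : Set (EuclideanSpace ℝ ι) := {x | (∀ i, |x i| ≤ 1) ∧ ∃ i, |x i| = 1} with hB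
  -- B has finite measure
  have hBfin : μH[d] B < ⊤ := by
    have hsub : B ⊆ ⋃ p : ι,
        ({x : EuclideanSpace ℝ ι | x p = 1 ∧ ∀ i, |x i| ≤ 1} ∪
         {x : EuclideanSpace ℝ ι | x p = -1 ∧ ∀ i, |x i| ≤ 1}) := by
      rintro x ⟨hb, ⟨i, hi⟩⟩
      refine Set.mem_iUnion.2 ⟨i, ?_⟩
      rcases abs_eq (by norm_num : (0:ℝ) ≤ 1) |>.1 hi with h | h
      · exact Or.inl ⟨h, hb⟩
      · exact Or.inr ⟨h, hb⟩
    calc μH[d] B ≤ ∑' p : ι, μH[d]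
          ({x : EuclideanSpace ℝ ι | x p = 1 ∧ ∀ i, |x i| ≤ 1} ∪
           {x : EuclideanSpace ℝ ι | x p = -1 ∧ ∀ i, |x i| ≤ 1}) :=
        le_trans (measure_mono hsub) (measure_iUnion_le _)
      _ < ⊤ := by
        rw [tsum_fintype]
        apply ENNReal.sum_lt_top.2
        intro p _
        exact lt_of_le_of_lt (measure_union_le _ _)
          (ENNReal.add_lt_top.2 ⟨face_finite p 1, face_finite p (-1)⟩)
  -- the normalization map
  set g : EuclideanSpace ℝ ι → EuclideanSpace ℝ ι := fun x => (r * ‖x‖⁻¹) • x with hg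
  have hBnorm : B ⊆ {x : EuclideanSpace ℝ ι | 1 ≤ ‖x‖} := by
    rintro x ⟨-, ⟨i, hi⟩⟩
    exact le_trans (le_of_eq hi.symm) (euclid_abs_le x i)
  have hlip : LipschitzOnWith (Real.toNNReal (2 * r)) g {x : EuclideanSpace ℝ ι | 1 ≤ ‖x‖} := by
    apply LipschitzOnWith.of_dist_le_mul
    intro x hx y hy
    simp only [Set.mem_setOf_eq] at hx hy
    have hxpos : (0:ℝ) < ‖x‖ := lt_of_lt_of_le one_pos hx
    have hypos : (0:ℝ) < ‖y‖ := lt_of_lt_of_le one_pos hy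
    have hsplit : g x - g y = (r * ‖x‖⁻¹) • (x - y) + ((r * ‖x‖⁻¹) - (r * ‖y‖⁻¹)) • y := by
      simp only [hg]
      module
    have h1 : dist (g x) (g y) ≤ (r * ‖x‖⁻¹) * ‖x - y‖ + |r * ‖x‖⁻¹ - r * ‖y‖⁻¹| * ‖y‖ := by
      rw [dist_eq_norm, hsplit]
      refine le_trans (norm_add_le _ _) ?_
      rw [norm_smul, norm_smul, Real.norm_eq_abs, Real.norm_eq_abs,
        abs_of_nonneg (show (0:ℝ) ≤ r * ‖x‖⁻¹ by positivity)]
    have habs : |r * ‖x‖⁻¹ - r * ‖y‖⁻¹| * ‖y‖ ≤ r * ‖x - y‖ := by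
      have he : r * ‖x‖⁻¹ - r * ‖y‖⁻¹ = r * ((‖y‖ - ‖x‖) * (‖x‖⁻¹ * ‖y‖⁻¹)) := by
        field_simp
      rw [he, abs_mul, abs_mul, abs_of_nonneg hr.le,
        abs_of_nonneg (by positivity : (0:ℝ) ≤ ‖x‖⁻¹ * ‖y‖⁻¹)]
      have h2 : |‖y‖ - ‖x‖| ≤ ‖x - y‖ := by
        rw [← norm_neg (x - y), neg_sub]
        exact abs_norm_sub_norm_le y x
      have h3 : ‖x‖⁻¹ * ‖y‖⁻¹ * ‖y‖ ≤ 1 := by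
        rw [mul_assoc, inv_mul_cancel₀ hypos.ne']
        rw [mul_one]
        exact inv_le_one_of_one_le₀ hx
      calc r * (|‖y‖ - ‖x‖| * (‖x‖⁻¹ * ‖y‖⁻¹)) * ‖y‖
          = r * |‖y‖ - ‖x‖| * (‖x‖⁻¹ * ‖y‖⁻¹ * ‖y‖) := by ring
        _ ≤ r * ‖x - y‖ * 1 := by
            apply mul_le_mul
            · exact mul_le_mul_of_nonneg_left h2 hr.le
            · exact h3
            · positivity
            · positivity
        _ = r * ‖x - y‖ := by ring
    have hinv : r * ‖x‖⁻¹ ≤ r := by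
      apply mul_le_of_le_one_right hr.le
      exact inv_le_one_of_one_le₀ hx
    have := le_trans h1 (add_le_add_right habs _)
    rw [Real.coe_toNNReal _ (by positivity), dist_eq_norm]
    calc dist (g x) (g y) ≤ (r * ‖x‖⁻¹) * ‖x - y‖ + r * ‖x - y‖ := this
      _ ≤ r * ‖x - y‖ + r * ‖x - y‖ :=
          add_le_add_left (mul_le_mul_of_nonneg_right hinv (norm_nonneg _)) _
      _ = 2 * r * ‖x - y‖ := by ring
  have hsph : Metric.sphere (0 : EuclideanSpace ℝ ι) r ⊆ g '' B := by
    intro u hu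
    have hun : ‖u‖ = r := by rwa [mem_sphere_iff_norm, sub_zero] at hu
    obtain ⟨i₀, -, hmax⟩ := Finset.exists_max_image Finset.univ (fun i => |u i|)
      ⟨Classical.arbitrary ι, Finset.mem_univ _⟩
    set M : ℝ := |u i₀| with hM
    have hMpos : 0 < M := by
      rcases lt_or_ge 0 M with h | h
      · exact h
      · exfalso
        have hz : ∀ i, u i = 0 := by
          intro i
          have := le_trans (hmax i (Finset.mem_univ i)) h
          have := abs_nonneg (u i)
          have : |u i| = 0 := le_antisymm (by linarith) (abs_nonneg _)
          exact abs_eq_zero.1 this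
        have : ‖u‖ ^ 2 = 0 := by
          rw [euclid_norm_sq]
          exact Finset.sum_eq_zero fun i _ => by rw [hz i]; ring
        nlinarith [hun, hr]
    refine ⟨(M⁻¹ : ℝ) • u, ⟨?_, ⟨i₀, ?_⟩⟩, ?_⟩
    · intro i
      show |((M⁻¹ : ℝ) • u) i| ≤ 1
      rw [show ((M⁻¹ : ℝ) • u) i = M⁻¹ * u i from rfl, abs_mul,
        abs_of_nonneg (by positivity : (0:ℝ) ≤ M⁻¹)]
      rw [← inv_mul_cancel₀ hMpos.ne']
      exact mul_le_mul_of_nonneg_left (hmax i (Finset.mem_univ i)) (by positivity)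
    · show |((M⁻¹ : ℝ) • u) i₀| = 1
      rw [show ((M⁻¹ : ℝ) • u) i₀ = M⁻¹ * u i₀ from rfl, abs_mul,
        abs_of_nonneg (by positivity : (0:ℝ) ≤ M⁻¹), ← hM, inv_mul_cancel₀ hMpos.ne']
    · have hnorm : ‖(M⁻¹ : ℝ) • u‖ = M⁻¹ * r := by
        rw [norm_smul, Real.norm_eq_abs, abs_of_nonneg (by positivity : (0:ℝ) ≤ M⁻¹), hun]
      simp only [hg, hnorm]
      rw [smul_smul]
      have : r * (M⁻¹ * r)⁻¹ * M⁻¹ = 1 := by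
        field_simp
      rw [this, one_smul]
  calc μH[d] (Metric.sphere (0 : EuclideanSpace ℝ ι) r) ≤ μH[d] (g '' B) := measure_mono hsph
    _ ≤ ((Real.toNNReal (2 * r) : ℝ≥0∞)) ^ d * μH[d] B :=
        (hlip.mono hBnorm).hausdorffMeasure_image_le hd0
    _ < ⊤ := ENNReal.mul_lt_top
        (ENNReal.rpow_lt_top_of_nonneg hd0 ENNReal.coe_ne_top) hBfin

end finite2

section moments

variable {ι : Type*} [Fintype ι] [DecidableEq ι] [Nonempty ι]

lemma integrable_sphere_of_bdd (r : ℝ) (hr : 0 < r) (f : EuclideanSpace ℝ ι → ℝ)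
    (hc : Continuous f)
    (hbd : ∀ x ∈ Metric.sphere (0 : EuclideanSpace ℝ ι) r, ‖f x‖ ≤ r ^ 2) :
    IntegrableOn f (Metric.sphere (0 : EuclideanSpace ℝ ι) r)
      μH[(Fintype.card ι : ℝ) - 1] := by
  have hfin := sphere_hausdorff_lt_top (ι := ι) r hr
  haveI : IsFiniteMeasure ((μH[(Fintype.card ι : ℝ) - 1] :
      Measure (EuclideanSpace ℝ ι)).restrict (Metric.sphere 0 r)) := by
    constructor
    rw [Measure.restrict_apply_univ]
    exact hfin
  apply Integrable.mono' (integrable_const (r ^ 2)) hc.aestronglyMeasurable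
  filter_upwards [ae_restrict_mem Metric.isClosed_sphere.measurableSet] with x hx
  exact hbd x hx

lemma continuous_coord (q : ι) : Continuous fun x : EuclideanSpace ℝ ι => x q := by
  exact (EuclideanSpace.proj (𝕜 := ℝ) q).continuous

lemma integrable_coord_mul (r : ℝ) (hr : 0 < r) (p q : ι) :
    IntegrableOn (fun x : EuclideanSpace ℝ ι => x p * x q)
      (Metric.sphere (0 : EuclideanSpace ℝ ι) r) μH[(Fintype.card ι : ℝ) - 1] := by
  apply integrable_sphere_of_bdd r hr _ ((continuous_coord p).mul (continuous_coord q))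
  intro x hx
  have hxr : ‖x‖ = r := by rwa [mem_sphere_iff_norm, sub_zero] at hx
  have h1 := euclid_abs_le x p
  have h2 := euclid_abs_le x q
  rw [Real.norm_eq_abs, Pi.mul_apply, abs_mul]
  calc |x p| * |x q| ≤ r * r := by
        apply mul_le_mul (hxr ▸ h1) (hxr ▸ h2) (abs_nonneg _) hr.le
    _ = r ^ 2 := by ring

lemma integral_coord_sq (r : ℝ) (hr : 0 < r) (p : ι) :
    ∫ x in Metric.sphere (0 : EuclideanSpace ℝ ι) r, x p ^ 2 ∂μH[(Fintype.card ι : ℝ) - 1]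
      = r ^ 2 * (μH[(Fintype.card ι : ℝ) - 1]
          (Metric.sphere (0 : EuclideanSpace ℝ ι) r)).toReal / Fintype.card ι := by
  set d : ℝ := (Fintype.card ι : ℝ) - 1 with hd
  have hint : ∀ q : ι, IntegrableOn (fun x : EuclideanSpace ℝ ι => x q ^ 2)
      (Metric.sphere (0 : EuclideanSpace ℝ ι) r) μH[d] := by
    intro q
    have := integrable_coord_mul (ι := ι) r hr q q
    simpa [← sq] using this
  have hsum : ∑ q : ι, ∫ x in Metric.sphere (0 : EuclideanSpace ℝ ι) r, x q ^ 2 ∂μH[d]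
      = r ^ 2 * (μH[d] (Metric.sphere (0 : EuclideanSpace ℝ ι) r)).toReal := by
    rw [← integral_finset_sum _ fun q _ => hint q]
    rw [setIntegral_congr_fun (f := fun x : EuclideanSpace ℝ ι => ∑ q : ι, x q ^ 2)
      (g := fun _ => r ^ 2) Metric.isClosed_sphere.measurableSet ?_]
    · rw [setIntegral_const, smul_eq_mul, mul_comm]; rfl
    · intro x hx
      have hxr : ‖x‖ = r := by rwa [Metric.mem_sphere, dist_zero_right] at hx
      show ∑ q : ι, x q ^ 2 = r ^ 2
      rw [← euclid_norm_sq, hxr]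
  have hswap : ∀ q : ι, (∫ x in Metric.sphere (0 : EuclideanSpace ℝ ι) r, x q ^ 2 ∂μH[d])
      = ∫ x in Metric.sphere (0 : EuclideanSpace ℝ ι) r, x p ^ 2 ∂μH[d] :=
    fun q => integral_sq_swap r d q p
  rw [Finset.sum_congr rfl fun q _ => hswap q, Finset.sum_const, Finset.card_univ,
    nsmul_eq_mul] at hsum
  have hcard : (0 : ℝ) < Fintype.card ι := by
    exact_mod_cast (Fintype.card_pos : 0 < Fintype.card ι)
  field_simp
  linarith [hsum]

lemma integral_coord_mul_eq (r : ℝ) (hr : 0 < r) (p q : ι) :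
    ∫ x in Metric.sphere (0 : EuclideanSpace ℝ ι) r, x p * x q ∂μH[(Fintype.card ι : ℝ) - 1]
      = if p = q then r ^ 2 * (μH[(Fintype.card ι : ℝ) - 1]
          (Metric.sphere (0 : EuclideanSpace ℝ ι) r)).toReal / Fintype.card ι else 0 := by
  by_cases h : p = q
  · subst h
    rw [if_pos rfl, ← integral_coord_sq r hr p]
    apply integral_congr_ae
    filter_upwards with x
    ring
  · rw [if_neg h]
    exact integral_coord_mul_ne r _ h

end moments

noncomputable def matOf {n m : ℕ} (x : EuclideanSpace ℝ (Fin n × Fin m)) :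
    Matrix (Fin n) (Fin m) ℝ := Matrix.of fun i j => x (i, j)

/-- `∫_V (X ⊗ Y)ᵀ H (X ⊗ Y) dX = (ω₁²|V|/(n_X m_X)) I_{m_X} ⊗ (Yᵀ H* Y)`,
where `(H*)_{i,j} = tr(h_{i,j})`, i.e. `(H*)_{i,j} = ∑_a H_{(a,i),(a,j)}`. -/
theorem stmt1 (nX mX nY mY : ℕ) (hnX : 0 < nX) (hmX : 0 < mX) (ω₁ : ℝ) (hω : 0 < ω₁)
    (H : Matrix (Fin nX × Fin nY) (Fin nX × Fin nY) ℝ)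
    (Y : Matrix (Fin nY) (Fin mY) ℝ) :
    ∀ a b : Fin mX × Fin mY,
      (∫ x in Metric.sphere (0 : EuclideanSpace ℝ (Fin nX × Fin mX)) ω₁,
          ((matOf x ⊗ₖ Y)ᵀ * H * (matOf x ⊗ₖ Y)) a b ∂(μH[(nX * mX : ℝ) - 1])) =
        ω₁ ^ 2 *
            (μH[(nX * mX : ℝ) - 1]
              (Metric.sphere (0 : EuclideanSpace ℝ (Fin nX × Fin mX)) ω₁)).toReal /
            (nX * mX) *
          (((1 : Matrix (Fin mX) (Fin mX) ℝ) ⊗ₖ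
              (Yᵀ * (Matrix.of fun i j : Fin nY => ∑ a' : Fin nX, H (a', i) (a', j)) * Y))
            a b) := by
  intro a b
  haveI : Nonempty (Fin nX) := ⟨⟨0, hnX⟩⟩
  haveI : Nonempty (Fin mX) := ⟨⟨0, hmX⟩⟩
  have hc : ((Fintype.card (Fin nX × Fin mX) : ℕ) : ℝ) = (nX : ℝ) * (mX : ℝ) := by
    simp [Fintype.card_prod]
  set S := Metric.sphere (0 : EuclideanSpace ℝ (Fin nX × Fin mX)) ω₁ with hS
  set κ : ℝ := ω₁ ^ 2 * ((μH[(nX * mX : ℝ) - 1] : Measure (EuclideanSpace ℝ (Fin nX × Fin mX)))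
      S).toReal / ((nX : ℝ) * (mX : ℝ)) with hκ
  have key : ∀ p q : Fin nX × Fin mX,
      (∫ x in S, x p * x q ∂(μH[(nX * mX : ℝ) - 1])) = if p = q then κ else 0 := by
    intro p q
    have h := integral_coord_mul_eq (ι := Fin nX × Fin mX) ω₁ hω p q
    rw [hc] at h
    exact h
  have hint : ∀ p q : Fin nX × Fin mX,
      IntegrableOn (fun x : EuclideanSpace ℝ (Fin nX × Fin mX) => x p * x q) S
        μH[(nX * mX : ℝ) - 1] := by
    intro p q
    have h := integrable_coord_mul (ι := Fin nX × Fin mX) ω₁ hω p q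
    rwa [hc] at h
  have hexp : ∀ x : EuclideanSpace ℝ (Fin nX × Fin mX),
      ((matOf x ⊗ₖ Y)ᵀ * H * (matOf x ⊗ₖ Y)) a b
        = ∑ u : Fin nX × Fin nY, ∑ v : Fin nX × Fin nY,
            (Y u.2 a.2 * H u v * Y v.2 b.2) * (x (u.1, a.1) * x (v.1, b.1)) := by
    intro x
    simp only [Matrix.mul_apply, Matrix.transpose_apply, Matrix.kroneckerMap_apply, matOf,
      Matrix.of_apply, Finset.sum_mul]
    rw [Finset.sum_comm]
    refine Finset.sum_congr rfl fun u _ => ?_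
    refine Finset.sum_congr rfl fun v _ => ?_
    ring
  calc (∫ x in S, ((matOf x ⊗ₖ Y)ᵀ * H * (matOf x ⊗ₖ Y)) a b ∂(μH[(nX * mX : ℝ) - 1]))
      = ∫ x in S, ∑ u : Fin nX × Fin nY, ∑ v : Fin nX × Fin nY,
          (Y u.2 a.2 * H u v * Y v.2 b.2) * (x (u.1, a.1) * x (v.1, b.1))
          ∂(μH[(nX * mX : ℝ) - 1]) := by
        apply integral_congr_ae
        filter_upwards with x using hexp x
    _ = ∑ u : Fin nX × Fin nY, ∑ v : Fin nX × Fin nY,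
          (Y u.2 a.2 * H u v * Y v.2 b.2) *
            ∫ x in S, x (u.1, a.1) * x (v.1, b.1) ∂(μH[(nX * mX : ℝ) - 1]) := by
        have step1 := integral_finset_sum (μ := (μH[(nX * mX : ℝ) - 1] :
            Measure (EuclideanSpace ℝ (Fin nX × Fin mX))).restrict S) Finset.univ
          (f := fun (u : Fin nX × Fin nY) (x : EuclideanSpace ℝ (Fin nX × Fin mX)) =>
            ∑ v : Fin nX × Fin nY,
              (Y u.2 a.2 * H u v * Y v.2 b.2) * (x (u.1, a.1) * x (v.1, b.1)))
          (fun u _ => integrable_finset_sum _ fun v _ => ((hint _ _).const_mul _))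
        rw [step1]
        refine Finset.sum_congr rfl fun u _ => ?_
        have step2 := integral_finset_sum (μ := (μH[(nX * mX : ℝ) - 1] :
            Measure (EuclideanSpace ℝ (Fin nX × Fin mX))).restrict S) Finset.univ
          (f := fun (v : Fin nX × Fin nY) (x : EuclideanSpace ℝ (Fin nX × Fin mX)) =>
            (Y u.2 a.2 * H u v * Y v.2 b.2) * (x (u.1, a.1) * x (v.1, b.1)))
          (fun v _ => ((hint _ _).const_mul _))
        rw [step2]
        exact Finset.sum_congr rfl fun v _ => integral_const_mul _ _
    _ = ∑ u : Fin nX × Fin nY, ∑ v : Fin nX × Fin nY,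
          (Y u.2 a.2 * H u v * Y v.2 b.2) *
            (if (u.1, a.1) = (v.1, b.1) then κ else 0) := by
        refine Finset.sum_congr rfl fun u _ => Finset.sum_congr rfl fun v _ => ?_
        rw [key]
    _ = κ * (((1 : Matrix (Fin mX) (Fin mX) ℝ) ⊗ₖ
          (Yᵀ * (Matrix.of fun i j : Fin nY => ∑ a' : Fin nX, H (a', i) (a', j)) * Y))
            a b) := by
        simp only [Matrix.kroneckerMap_apply, Matrix.one_apply, Matrix.mul_apply,
          Matrix.of_apply, Matrix.transpose_apply, Prod.mk.injEq]
        by_cases hab : a.1 = b.1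
        · simp only [hab, and_true, if_true]
          simp only [Fintype.sum_prod_type]
          have inner : ∀ (i : Fin nX) (j : Fin nY),
              (∑ k : Fin nX, ∑ l : Fin nY,
                Y j a.2 * H (i, j) (k, l) * Y l b.2 * (if i = k then κ else 0))
                = ∑ l : Fin nY, Y j a.2 * H (i, j) (i, l) * Y l b.2 * κ := by
            intro i j
            have h1 : ∀ k : Fin nX,
                (∑ l : Fin nY, Y j a.2 * H (i, j) (k, l) * Y l b.2 * (if i = k then κ else 0))
                  = if i = k then ∑ l : Fin nY, Y j a.2 * H (i, j) (k, l) * Y l b.2 * κ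
                    else 0 := by
              intro k
              by_cases h : i = k <;> simp [h]
            rw [Finset.sum_congr rfl fun k _ => h1 k, Finset.sum_ite_eq]
            simp
          rw [Finset.sum_congr rfl fun i _ => Finset.sum_congr rfl fun j _ => inner i j]
          calc (∑ i : Fin nX, ∑ j : Fin nY, ∑ l : Fin nY,
                Y j a.2 * H (i, j) (i, l) * Y l b.2 * κ)
              = ∑ j : Fin nY, ∑ i : Fin nX, ∑ l : Fin nY,
                Y j a.2 * H (i, j) (i, l) * Y l b.2 * κ := Finset.sum_comm
            _ = ∑ j : Fin nY, ∑ l : Fin nY, ∑ i : Fin nX,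
                Y j a.2 * H (i, j) (i, l) * Y l b.2 * κ :=
                Finset.sum_congr rfl fun j _ => Finset.sum_comm
            _ = ∑ l : Fin nY, ∑ j : Fin nY, ∑ i : Fin nX,
                Y j a.2 * H (i, j) (i, l) * Y l b.2 * κ := Finset.sum_comm
            _ = κ * (1 * ∑ l : Fin nY,
                (∑ j : Fin nY, Y j a.2 * ∑ i : Fin nX, H (i, j) (i, l)) * Y l b.2) := by
                simp only [one_mul, Finset.mul_sum, Finset.sum_mul]
                refine Finset.sum_congr rfl fun l _ => Finset.sum_congr rfl fun j _ =>
                  Finset.sum_congr rfl fun i _ => ?_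
                ring
        · simp only [hab, and_false, if_false, mul_zero, if_false]
          simp [Finset.sum_const_zero]
    _ = ω₁ ^ 2 *
            ((μH[(nX * mX : ℝ) - 1] :
              Measure (EuclideanSpace ℝ (Fin nX × Fin mX))) S).toReal /
            (nX * mX) *
          (((1 : Matrix (Fin mX) (Fin mX) ℝ) ⊗ₖ
              (Yᵀ * (Matrix.of fun i j : Fin nY => ∑ a' : Fin nX, H (a', i) (a', j)) * Y))
            a b) := by rw [hκ]
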